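/- Let U be a nonempty open subset of ℝⁿ. For i = 1, 2, let Aᵢ be an n×n real matrix, bᵢ, cᵢ ∈ ℝⁿ and δᵢ ∈ ℝ be such that the (n+1)×(n+1) block matrix Mᵢ = [[Aᵢ, bᵢ],[cᵢᵀ, δᵢ]] is invertible and ⟨cᵢ,x⟩ + δᵢ ≠ 0 for all x ∈ U, and let fᵢ(x) = (Aᵢ·x + bᵢ)/(⟨cᵢ,x⟩ + δᵢ). If f₁(x) = f₂(x) for all x ∈ U, then there exists a nonzero real number λ with M₂ = λ·M₁; in particular f₁ and f₂ agree at every point of ℝⁿ where both denominators are nonzero. -/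

import Mathlib

/-- The predicate that `d` is the Hilbert distance of the bounded open convex set `Ω`:
`d x x = 0`, and for distinct `x y ∈ Ω` there are frontier points `x̄` (with `x`
strictly between `x̄` and `y`) and `ȳ` (with `y` strictly between `x` and `ȳ`) such that
`d x y = log ((‖ȳ - x‖/‖ȳ - y‖) * (‖x̄ - y‖/‖x̄ - x‖))`. -/
def IsHilbertDist {n : ℕ} (Ω : Set (EuclideanSpace ℝ (Fin n)))
    (d : EuclideanSpace ℝ (Fin n) → EuclideanSpace ℝ (Fin n) → ℝ) : Prop :=
  (∀ x, d x x = 0) ∧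
  ∀ x ∈ Ω, ∀ y ∈ Ω, x ≠ y →
    ∃ xb ∈ frontier Ω, ∃ yb ∈ frontier Ω,
      x ∈ openSegment ℝ xb y ∧ y ∈ openSegment ℝ x yb ∧
      d x y = Real.log ((‖yb - x‖ / ‖yb - y‖) * (‖xb - y‖ / ‖xb - x‖))

/-- The `(n+1) × (n+1)` block matrix `[[A, b], [cᵀ, δ]]`. -/
noncomputable def projMat {n : ℕ} (A : Matrix (Fin n) (Fin n) ℝ)
    (b c : EuclideanSpace ℝ (Fin n)) (δ : ℝ) :
    Matrix (Fin n ⊕ Fin 1) (Fin n ⊕ Fin 1) ℝ :=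
  Matrix.fromBlocks A (Matrix.replicateCol (Fin 1) b.ofLp) (Matrix.replicateRow (Fin 1) c.ofLp) (Matrix.of fun _ _ => δ)

/-- The fractional linear map `x ↦ (A·x + b) / (⟨c,x⟩ + δ)`. -/
noncomputable def fracLin {n : ℕ} (A : Matrix (Fin n) (Fin n) ℝ)
    (b c : EuclideanSpace ℝ (Fin n)) (δ : ℝ)
    (x : EuclideanSpace ℝ (Fin n)) : EuclideanSpace ℝ (Fin n) :=
  ((∑ i, c i * x i) + δ)⁻¹ • ((WithLp.equiv 2 (Fin n → ℝ)).symm (A.mulVec x) + b)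

/-- `f` is the restriction to `U` of a projective transformation of `ℝPⁿ`:
it has fractional linear form `x ↦ (A·x + b)/(⟨c,x⟩ + δ)` on `U`, with the block matrix
`[[A, b],[cᵀ, δ]]` invertible and the denominator nonvanishing on `U`. -/
def IsProjectiveRestriction {n : ℕ} (U : Set (EuclideanSpace ℝ (Fin n)))
    (f : EuclideanSpace ℝ (Fin n) → EuclideanSpace ℝ (Fin n)) : Prop :=
  ∃ (A : Matrix (Fin n) (Fin n) ℝ) (b c : EuclideanSpace ℝ (Fin n)) (δ : ℝ),
    (projMat A b c δ).det ≠ 0 ∧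
    ∀ x ∈ U, ((∑ i, c i * x i) + δ ≠ 0) ∧ f x = fracLin A b c δ x

private lemma quad_vanish {a b c η : ℝ} (hη : 0 < η)
    (h : ∀ t : ℝ, |t| < η → a * t ^ 2 + b * t + c = 0) :
    a = 0 ∧ b = 0 ∧ c = 0 := by
  have h0 := h 0 (by simpa using hη)
  have hpos : (0:ℝ) < η / 2 := by linarith
  have h1 := h (η/2) (by rw [abs_of_pos hpos]; linarith)
  have h2 := h (-(η/2)) (by rw [abs_neg, abs_of_pos hpos]; linarith)
  have hc : c = 0 := by nlinarith [h0]
  have hne : (η/2) ≠ 0 := ne_of_gt hpos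
  have ha : a = 0 := by
    have key : a * (η/2)^2 = 0 := by nlinarith [h1, h2]
    rcases mul_eq_zero.mp key with h | h
    · exact h
    · exact absurd h (pow_ne_zero _ hne)
  have hb : b = 0 := by
    have key : b * (η/2) = 0 := by nlinarith [h1]
    rcases mul_eq_zero.mp key with h | h
    · exact h
    · exact absurd h hne
  exact ⟨ha, hb, hc⟩

/-- two fractional linear transformations agreeing on a nonempty open set
have proportional matrices, and hence agree wherever both are defined. -/
theorem fracLin_unique {n : ℕ} (U : Set (EuclideanSpace ℝ (Fin n)))
    (hne : U.Nonempty) (hO : IsOpen U)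
    (A₁ A₂ : Matrix (Fin n) (Fin n) ℝ) (b₁ c₁ b₂ c₂ : EuclideanSpace ℝ (Fin n)) (δ₁ δ₂ : ℝ)
    (hdet₁ : (projMat A₁ b₁ c₁ δ₁).det ≠ 0) (hdet₂ : (projMat A₂ b₂ c₂ δ₂).det ≠ 0)
    (hden₁ : ∀ x ∈ U, (∑ i, c₁ i * x i) + δ₁ ≠ 0)
    (hden₂ : ∀ x ∈ U, (∑ i, c₂ i * x i) + δ₂ ≠ 0)
    (heq : ∀ x ∈ U, fracLin A₁ b₁ c₁ δ₁ x = fracLin A₂ b₂ c₂ δ₂ x) :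
    (∃ lam : ℝ, lam ≠ 0 ∧ projMat A₂ b₂ c₂ δ₂ = lam • projMat A₁ b₁ c₁ δ₁) ∧
    ∀ x : EuclideanSpace ℝ (Fin n),
      (∑ i, c₁ i * x i) + δ₁ ≠ 0 → (∑ i, c₂ i * x i) + δ₂ ≠ 0 →
      fracLin A₁ b₁ c₁ δ₁ x = fracLin A₂ b₂ c₂ δ₂ x := by
  classical
  -- Scalar form of the hypothesis
  have hF : ∀ x ∈ U, ∀ j, ((∑ i, c₂ i * x i) + δ₂) * (A₁.mulVec x j + b₁ j)
      = ((∑ i, c₁ i * x i) + δ₁) * (A₂.mulVec x j + b₂ j) := by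
    intro x hx j
    have hd1 := hden₁ x hx
    have hd2 := hden₂ x hx
    have h : ((∑ i, c₁ i * x i) + δ₁)⁻¹ * (A₁.mulVec x j + b₁ j)
        = ((∑ i, c₂ i * x i) + δ₂)⁻¹ * (A₂.mulVec x j + b₂ j) := congrArg (fun v : EuclideanSpace ℝ (Fin n) => v j) (heq x hx)
    field_simp at h
    linear_combination h
  obtain ⟨x₀, hx₀⟩ := hne
  obtain ⟨ε, hε, hball⟩ := Metric.isOpen_iff.mp hO x₀ hx₀
  have hmem : ∀ (y : EuclideanSpace ℝ (Fin n)) (t : ℝ), |t| < ε / (‖y‖ + 1) → x₀ + t • y ∈ U := by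
    intro y t ht
    apply hball
    rw [Metric.mem_ball, dist_eq_norm, add_sub_cancel_left, norm_smul, Real.norm_eq_abs]
    have hy : (0:ℝ) < ‖y‖ + 1 := by positivity
    calc |t| * ‖y‖ ≤ |t| * (‖y‖ + 1) := by nlinarith [abs_nonneg t]
      _ < ε := by rwa [← lt_div_iff₀ hy]
  -- expansion lemmas
  have hmv : ∀ (A : Matrix (Fin n) (Fin n) ℝ) (x y : EuclideanSpace ℝ (Fin n)) (t : ℝ) (j : Fin n),
      A.mulVec (x + t • y) j = A.mulVec x j + t * A.mulVec y j := by
    intro A x y t j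
    simp only [Matrix.mulVec, dotProduct, Finset.mul_sum, ← Finset.sum_add_distrib]
    apply Finset.sum_congr rfl
    intro k _
    have hk : (x.ofLp + t • y.ofLp) k = x k + t * y k := rfl
    rw [hk]; ring
  have hsum : ∀ (c x y : EuclideanSpace ℝ (Fin n)) (t : ℝ),
      (∑ i, c i * (x + t • y) i) = (∑ i, c i * x i) + t * (∑ i, c i * y i) := by
    intro c x y t
    simp only [Finset.mul_sum, ← Finset.sum_add_distrib]
    apply Finset.sum_congr rfl
    intro k _
    have hk : (x + t • y) k = x k + t * y k := rfl
    rw [hk]; ring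
  -- coefficient extraction
  have key : ∀ (y : EuclideanSpace ℝ (Fin n)) (j : Fin n),
      ((∑ i, c₂ i * y i) * A₁.mulVec y j - (∑ i, c₁ i * y i) * A₂.mulVec y j = 0) ∧
      ((∑ i, c₂ i * y i) * (A₁.mulVec x₀ j + b₁ j) + ((∑ i, c₂ i * x₀ i) + δ₂) * A₁.mulVec y j
        - (∑ i, c₁ i * y i) * (A₂.mulVec x₀ j + b₂ j)
        - ((∑ i, c₁ i * x₀ i) + δ₁) * A₂.mulVec y j = 0) := by
    intro y j
    have hη : 0 < ε / (‖y‖ + 1) := by positivity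
    have hq := quad_vanish hη (a := (∑ i, c₂ i * y i) * A₁.mulVec y j
        - (∑ i, c₁ i * y i) * A₂.mulVec y j)
      (b := (∑ i, c₂ i * y i) * (A₁.mulVec x₀ j + b₁ j) + ((∑ i, c₂ i * x₀ i) + δ₂) * A₁.mulVec y j
        - (∑ i, c₁ i * y i) * (A₂.mulVec x₀ j + b₂ j) - ((∑ i, c₁ i * x₀ i) + δ₁) * A₂.mulVec y j)
      (c := ((∑ i, c₂ i * x₀ i) + δ₂) * (A₁.mulVec x₀ j + b₁ j)
        - ((∑ i, c₁ i * x₀ i) + δ₁) * (A₂.mulVec x₀ j + b₂ j))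
      (by
        intro t ht
        have h := hF (x₀ + t • y) (hmem y t ht) j
        rw [hsum c₁, hsum c₂, WithLp.ofLp_add, WithLp.ofLp_smul, hmv A₁, hmv A₂] at h
        linear_combination h)
    exact ⟨hq.1, hq.2.1⟩
  have I2 : ∀ (y : EuclideanSpace ℝ (Fin n)) (j : Fin n),
      (∑ i, c₂ i * y i) * A₁.mulVec y j = (∑ i, c₁ i * y i) * A₂.mulVec y j := by
    intro y j; linear_combination (key y j).1
  have I2' : ∀ (u v : EuclideanSpace ℝ (Fin n)) (j : Fin n),
      (∑ i, c₂ i * u i) * A₁.mulVec v j + (∑ i, c₂ i * v i) * A₁.mulVec u j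
      = (∑ i, c₁ i * u i) * A₂.mulVec v j + (∑ i, c₁ i * v i) * A₂.mulVec u j := by
    intro u v j
    have huv : u + v = u + (1:ℝ) • v := by rw [one_smul]
    have h := I2 (u + v) j
    rw [huv, hsum c₁, hsum c₂, WithLp.ofLp_add, WithLp.ofLp_smul, hmv A₁, hmv A₂] at h
    linear_combination h - I2 u j - I2 v j
  have I1 : ∀ (y : EuclideanSpace ℝ (Fin n)) (j : Fin n),
      δ₂ * A₁.mulVec y j + (∑ i, c₂ i * y i) * b₁ j
      = δ₁ * A₂.mulVec y j + (∑ i, c₁ i * y i) * b₂ j := by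
    intro y j
    linear_combination (key y j).2 - I2' x₀ y j
  have I0 : ∀ j : Fin n, δ₂ * b₁ j = δ₁ * b₂ j := by
    intro j
    linear_combination hF x₀ hx₀ j - I2 x₀ j - I1 x₀ j
  -- mulVec formula for projMat
  have hmvP : ∀ (A : Matrix (Fin n) (Fin n) ℝ) (b c : EuclideanSpace ℝ (Fin n)) (δ : ℝ)
      (u : (Fin n ⊕ Fin 1) → ℝ),
      (∀ j, (projMat A b c δ).mulVec u (Sum.inl j)
          = A.mulVec (fun i => u (Sum.inl i)) j + u (Sum.inr 0) * b j) ∧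
      (projMat A b c δ).mulVec u (Sum.inr 0)
          = (∑ i, c i * u (Sum.inl i)) + u (Sum.inr 0) * δ := by
    intro A b c δ u
    constructor
    · intro j
      simp [projMat, Matrix.mulVec, dotProduct, Fintype.sum_sum_type,
        Matrix.fromBlocks, Fin.sum_univ_one, mul_comm]
    · simp [projMat, Matrix.mulVec, dotProduct, Fintype.sum_sum_type,
        Matrix.fromBlocks, Fin.sum_univ_one, mul_comm]
  -- homogenized identity
  have Hstar : ∀ (u : (Fin n ⊕ Fin 1) → ℝ) (k : Fin n ⊕ Fin 1),
      ((projMat A₂ b₂ c₂ δ₂).mulVec u) (Sum.inr 0) * ((projMat A₁ b₁ c₁ δ₁).mulVec u) k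
      = ((projMat A₁ b₁ c₁ δ₁).mulVec u) (Sum.inr 0) * ((projMat A₂ b₂ c₂ δ₂).mulVec u) k := by
    intro u k
    cases k with
    | inl j =>
      rw [(hmvP A₂ b₂ c₂ δ₂ u).2, (hmvP A₁ b₁ c₁ δ₁ u).2,
        (hmvP A₁ b₁ c₁ δ₁ u).1 j, (hmvP A₂ b₂ c₂ δ₂ u).1 j]
      have J2 := I2 (WithLp.toLp 2 (fun i => u (Sum.inl i))) j
      have J1 := I1 (WithLp.toLp 2 (fun i => u (Sum.inl i))) j
      simp only [WithLp.ofLp_toLp] at J2 J1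
      linear_combination J2
        + u (Sum.inr 0) * J1
        + (u (Sum.inr 0))^2 * I0 j
    | inr i =>
      have hi : i = 0 := Subsingleton.elim i 0
      subst hi
      rw [(hmvP A₂ b₂ c₂ δ₂ u).2, (hmvP A₁ b₁ c₁ δ₁ u).2]
      ring
  -- the transition matrix
  have hU1 : IsUnit (projMat A₁ b₁ c₁ δ₁).det := isUnit_iff_ne_zero.mpr hdet₁
  set N := projMat A₂ b₂ c₂ δ₂ * (projMat A₁ b₁ c₁ δ₁)⁻¹ with hNdef
  have HN : ∀ (w : (Fin n ⊕ Fin 1) → ℝ) (k : Fin n ⊕ Fin 1),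
      (N.mulVec w) (Sum.inr 0) * w k = w (Sum.inr 0) * (N.mulVec w) k := by
    intro w k
    have h1 : (projMat A₁ b₁ c₁ δ₁).mulVec ((projMat A₁ b₁ c₁ δ₁)⁻¹.mulVec w) = w := by
      rw [Matrix.mulVec_mulVec, Matrix.mul_nonsing_inv _ hU1, Matrix.one_mulVec]
    have h2 : (projMat A₂ b₂ c₂ δ₂).mulVec ((projMat A₁ b₁ c₁ δ₁)⁻¹.mulVec w) = N.mulVec w := by
      rw [Matrix.mulVec_mulVec]
    have h := Hstar ((projMat A₁ b₁ c₁ δ₁)⁻¹.mulVec w) k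
    rw [h1, h2] at h
    exact h
  set lam := N (Sum.inr 0) (Sum.inr 0) with hlamdef
  -- entries of N
  have hE : ∀ (p k : Fin n ⊕ Fin 1),
      N (Sum.inr 0) p * (Pi.single p 1 : (Fin n ⊕ Fin 1) → ℝ) k = (Pi.single p 1 : (Fin n ⊕ Fin 1) → ℝ) (Sum.inr 0) * N k p := by
    intro p k
    have h := HN (Pi.single p 1) k
    simpa [Matrix.mulVec_single] using h
  have hrow0 : ∀ i : Fin n, N (Sum.inr 0) (Sum.inl i) = 0 := by
    intro i
    have h := hE (Sum.inl i) (Sum.inl i)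
    simpa using h
  have hcol0 : ∀ j : Fin n, N (Sum.inl j) (Sum.inr 0) = 0 := by
    intro j
    have h := hE (Sum.inr 0) (Sum.inl j)
    simpa [hlamdef] using h.symm
  have hblock : ∀ (i : Fin n) (k : Fin n ⊕ Fin 1),
      lam * ((Pi.single (Sum.inr 0) 1 : (Fin n ⊕ Fin 1) → ℝ) k
        + (Pi.single (Sum.inl i) 1 : (Fin n ⊕ Fin 1) → ℝ) k)
      = N k (Sum.inr 0) + N k (Sum.inl i) := by
    intro i k
    have h := HN ((Pi.single (Sum.inr 0) 1 : (Fin n ⊕ Fin 1) → ℝ)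
      + (Pi.single (Sum.inl i) 1 : (Fin n ⊕ Fin 1) → ℝ)) k
    simp only [Matrix.mulVec_add, Matrix.mulVec_single_one, Matrix.col_apply, Pi.add_apply, mul_one,
      Pi.single_eq_same, Pi.single_apply, reduceCtorEq, if_false, add_zero, zero_add,
      hrow0 i, one_mul] at h
    simp only [Pi.single_apply]
    linarith [h]
  have hdiag : ∀ (i j : Fin n), N (Sum.inl j) (Sum.inl i) = lam * (if j = i then 1 else 0) := by
    intro i j
    have h := hblock i (Sum.inl j)
    simp only [Pi.single_apply, reduceCtorEq, if_false, Sum.inl.injEq, hcol0 j, zero_add] at h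
    linarith [h]
  have hNid : N = lam • (1 : Matrix (Fin n ⊕ Fin 1) (Fin n ⊕ Fin 1) ℝ) := by
    ext a bb
    simp only [Matrix.smul_apply, Matrix.one_apply, smul_eq_mul]
    cases a with
    | inl j =>
      cases bb with
      | inl i => rw [hdiag i j]; simp [Sum.inl.injEq]
      | inr i' =>
        have hi : i' = 0 := Subsingleton.elim _ _
        subst hi
        simp [hcol0 j]
    | inr i2 =>
      have hi : i2 = 0 := Subsingleton.elim _ _
      subst hi
      cases bb with
      | inl i => simp [hrow0 i]
      | inr i' =>
        have hi : i' = 0 := Subsingleton.elim _ _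
        subst hi
        simp [hlamdef]
  have hprop : projMat A₂ b₂ c₂ δ₂ = lam • projMat A₁ b₁ c₁ δ₁ := by
    have hmul : N * projMat A₁ b₁ c₁ δ₁ = projMat A₂ b₂ c₂ δ₂ := by
      rw [hNdef, Matrix.mul_assoc, Matrix.nonsing_inv_mul _ hU1, Matrix.mul_one]
    rw [← hmul, hNid, Matrix.smul_mul, Matrix.one_mul]
  have hlam0 : lam ≠ 0 := by
    intro h0
    apply hdet₂
    rw [hprop, h0, zero_smul]
    exact Matrix.det_zero (n := Fin n ⊕ Fin 1)
  refine ⟨⟨lam, hlam0, hprop⟩, ?_⟩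
  intro x hx1 hx2
  have hA : ∀ i j, A₂ i j = lam * A₁ i j := by
    intro i j
    have h := congrFun (congrFun hprop (Sum.inl i)) (Sum.inl j)
    simpa [projMat, Matrix.fromBlocks] using h
  have hb : ∀ j, b₂ j = lam * b₁ j := by
    intro j
    have h := congrFun (congrFun hprop (Sum.inl j)) (Sum.inr 0)
    simpa [projMat, Matrix.fromBlocks] using h
  have hc : ∀ i, c₂ i = lam * c₁ i := by
    intro i
    have h := congrFun (congrFun hprop (Sum.inr 0)) (Sum.inl i)
    simpa [projMat, Matrix.fromBlocks] using h
  have hdel : δ₂ = lam * δ₁ := by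
    have h := congrFun (congrFun hprop (Sum.inr 0)) (Sum.inr 0)
    simpa [projMat, Matrix.fromBlocks] using h
  have hd : (∑ i, c₂ i * x i) + δ₂ = lam * ((∑ i, c₁ i * x i) + δ₁) := by
    simp only [hc, hdel, mul_add, Finset.mul_sum, mul_assoc]
  have hAx : ∀ j, A₂.mulVec x j = lam * A₁.mulVec x j := by
    intro j
    simp only [Matrix.mulVec, dotProduct]
    simp only [hA, Finset.mul_sum, mul_assoc]
  ext j
  show ((∑ i, c₁ i * x i) + δ₁)⁻¹ * (A₁.mulVec x j + b₁ j)
      = ((∑ i, c₂ i * x i) + δ₂)⁻¹ * (A₂.mulVec x j + b₂ j)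
  rw [hd, hAx j, hb j, mul_inv]
  field_simp
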